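/- For F(X) = -log det X with gradient ∇F(X) = -X^{-1}, any stationary point X̄ of X ↦ ∑ᵢ δ_F(X, Xᵢ) on the HPD manifold satisfies X̄^{-1} = (∑ᵢ Xᵢ^{-1}/√(1+‖Xᵢ^{-1}‖²)) / (∑ⱼ 1/√(1+‖Xⱼ^{-1}‖²)); the right-hand side is a Hermitian positive-definite matrix, so X̄ = ((∑ⱼ 1/√(1+‖Xⱼ^{-1}‖²))^{-1} ∑ᵢ Xᵢ^{-1}/√(1+‖Xᵢ^{-1}‖²))^{-1} is well defined and HPD. -/

import Mathlib

open Matrix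
open scoped ComplexOrder

attribute [local instance] Matrix.frobeniusNormedAddCommGroup Matrix.frobeniusNormedSpace

open Polynomial




lemma real_smul_mat {N : ℕ} (r : ℝ) (B : Matrix (Fin N) (Fin N) ℂ) :
    r • B = (r : ℂ) • B := by
  ext i j; simp [Complex.real_smul]

-- derivative of the log-det term
lemma logdet_hasDerivAt {N : ℕ} (Xbar Y Z : Matrix (Fin N) (Fin N) ℂ)
    (hXbar : Xbar.PosDef) (hZ : Z.PosDef) :
    HasDerivAt (fun ε : ℝ => Real.log ((Z * (Xbar + ε • Y)⁻¹).det.re))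
      (-(Matrix.trace (Xbar⁻¹ * Y)).re) 0 := by
  set c : ℂ := Matrix.trace (Xbar⁻¹ * Y) with hc
  set p : Polynomial ℂ := ((1 + (X : ℂ[X]) • (Xbar⁻¹ * Y).map C).det).divX.divX with hp
  set D : ℂ := Xbar.det with hD
  set a : ℂ := Z.det with ha
  have hDpos : (0 : ℂ) < D := hXbar.det_pos
  have hapos : (0 : ℂ) < a := hZ.det_pos
  have hDre : 0 < D.re := by
    rw [Complex.lt_def] at hDpos; simpa using hDpos.1
  have hare : 0 < a.re := by
    rw [Complex.lt_def] at hapos; simpa using hapos.1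
  have hDr : D = (D.re : ℂ) := by
    rw [Complex.lt_def] at hDpos
    exact Complex.ext rfl (by simpa using hDpos.2.symm)
  have har : a = (a.re : ℂ) := by
    rw [Complex.lt_def] at hapos
    exact Complex.ext rfl (by simpa using hapos.2.symm)
  set u : ℂ → ℂ := fun z => D * (1 + c * z + p.eval z * z ^ 2) with hu
  have hXu : IsUnit Xbar.det := hDpos.ne'.isUnit
  -- the function rewrite
  have key : ∀ ε : ℝ, (Z * (Xbar + ε • Y)⁻¹).det = a * (u (ε : ℂ))⁻¹ := by
    intro ε
    have h1 : Xbar + ε • Y = Xbar * (1 + (ε : ℂ) • (Xbar⁻¹ * Y)) := by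
      rw [Matrix.mul_add, Matrix.mul_one, Matrix.mul_smul, Matrix.mul_nonsing_inv_cancel_left _ _ hXu,
        real_smul_mat]
    have h2 : (Xbar + ε • Y).det = u (ε : ℂ) := by
      rw [h1, Matrix.det_mul, Matrix.det_one_add_smul ((ε : ℂ)) (Xbar⁻¹ * Y)]
    rw [Matrix.det_mul, Matrix.det_nonsing_inv, Ring.inverse_eq_inv', h2]
  have hu0 : u 0 = D := by simp [hu]
  -- derivative of u at 0
  have hud : HasDerivAt u (D * c) 0 := by
    have h1 : HasDerivAt (fun z : ℂ => c * z) c 0 := by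
      simpa using (hasDerivAt_id (0 : ℂ)).const_mul c
    have h2 : HasDerivAt (fun z : ℂ => p.eval z * z ^ 2)
        (p.derivative.eval 0 * 0 ^ 2 + p.eval 0 * (2 * 0 ^ 1)) 0 :=
      (p.hasDerivAt 0).mul (hasDerivAt_pow 2 0)
    have h3 : HasDerivAt (fun z : ℂ => 1 + c * z + p.eval z * z ^ 2)
        (c + (p.derivative.eval 0 * 0 ^ 2 + p.eval 0 * (2 * 0 ^ 1))) 0 :=
      ((h1.const_add 1).add h2)
    have := h3.const_mul D
    exact this.congr_deriv (by ring)
  -- derivative of z ↦ a * (u z)⁻¹ at 0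
  have hinv : HasDerivAt (fun z : ℂ => a * (u z)⁻¹) (a * (-(D * c) / (u 0) ^ 2)) 0 :=
    ((hud.inv (by rw [hu0]; exact hDpos.ne')).const_mul a)
  have hre : HasDerivAt (fun ε : ℝ => ((fun z : ℂ => a * (u z)⁻¹) ε).re)
      ((a * (-(D * c) / (u 0) ^ 2)).re) 0 := hinv.real_of_complex
  have hre' : HasDerivAt (fun ε : ℝ => (Z * (Xbar + ε • Y)⁻¹).det.re)
      ((a * (-(D * c) / D ^ 2)).re) 0 := by
    have heq : (fun ε : ℝ => (Z * (Xbar + ε • Y)⁻¹).det.re)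
        = fun ε : ℝ => (a * (u (ε : ℂ))⁻¹).re := funext fun ε => by rw [key ε]
    rw [heq]
    simpa only [hu0] using hre
  have hval : (Z * (Xbar + (0:ℝ) • Y)⁻¹).det.re = a.re / D.re := by
    rw [key 0, Complex.ofReal_zero, hu0, hDr, har, ← Complex.ofReal_inv, ← Complex.ofReal_mul,
      Complex.ofReal_re, div_eq_mul_inv]
    simp
  have hlog := hre'.log (by rw [hval]; positivity)
  convert hlog using 1
  rw [hval, hDr, har]
  have h2 : ((a.re : ℂ) * (-(((D.re : ℂ)) * c) / ((D.re:ℂ)) ^ 2)).re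
      = -(a.re / D.re) * c.re := by
    have : ((a.re : ℂ) * (-(((D.re : ℂ)) * c) / ((D.re:ℂ)) ^ 2))
        = ((-(a.re / D.re) : ℝ) : ℂ) * c := by
      push_cast
      field_simp
    rw [this, Complex.re_ofReal_mul]
  rw [h2]
  field_simp
  simp only [Complex.ofReal_re]
  field_simp




lemma real_smul_mat' {N : ℕ} (r : ℝ) (B : Matrix (Fin N) (Fin N) ℂ) :
    r • B = (r : ℂ) • B := by
  ext i j; simp [Complex.real_smul]

lemma trace_hasDerivAt {N : ℕ} (Xbar Y W : Matrix (Fin N) (Fin N) ℂ) :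
    HasDerivAt (fun ε : ℝ => (Matrix.trace (W * (Xbar + ε • Y))).re)
      ((Matrix.trace (W * Y)).re) 0 := by
  have heq : (fun ε : ℝ => (Matrix.trace (W * (Xbar + ε • Y))).re)
      = fun ε : ℝ => (Matrix.trace (W * Xbar)).re + ε * (Matrix.trace (W * Y)).re := by
    funext ε
    rw [Matrix.mul_add, Matrix.trace_add, real_smul_mat', Matrix.mul_smul, Matrix.trace_smul]
    simp [Complex.add_re, Complex.smul_re]
  rw [heq]
  simpa using ((hasDerivAt_id (0:ℝ)).mul_const ((Matrix.trace (W * Y)).re)).const_add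
    ((Matrix.trace (W * Xbar)).re)

lemma herm_trace_sq_zero {N : ℕ} (A : Matrix (Fin N) (Fin N) ℂ) (hA : A.IsHermitian)
    (h : (Matrix.trace (A * A)).re = 0) : A = 0 := by
  have h1 : A * A = Aᴴ * A := by rw [hA.eq]
  rw [h1] at h
  have h2 : (Matrix.trace (Aᴴ * A)).re = ∑ j, ∑ i, Complex.normSq (A i j) := by
    simp only [Matrix.trace, Matrix.diag, Matrix.mul_apply, Matrix.conjTranspose_apply]
    rw [Complex.re_sum]
    congr 1; funext j
    rw [Complex.re_sum]
    congr 1; funext i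
    simp [mul_comm, Complex.star_def, Complex.mul_conj]
  rw [h2] at h
  ext i j
  have : ∀ j ∈ Finset.univ, (0:ℝ) ≤ ∑ i, Complex.normSq (A i j) := fun j _ =>
    Finset.sum_nonneg fun i _ => Complex.normSq_nonneg _
  have hj := (Finset.sum_eq_zero_iff_of_nonneg this).mp h j (Finset.mem_univ j)
  have hi := (Finset.sum_eq_zero_iff_of_nonneg (fun i _ => Complex.normSq_nonneg (A i j))).mp hj i
    (Finset.mem_univ i)
  simpa using Complex.normSq_eq_zero.mp hi

/-- For `F(X) = -log det X` (gradient `∇F(X) = -X⁻¹`), any stationary point `X̄` on the HPD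
manifold of `X ↦ ∑ᵢ δ_F(X, Xᵢ)`, where
`δ_F(X,Y) = (log det(Y X⁻¹) + tr(Y⁻¹X) - N)/√(1+‖Y⁻¹‖²)` is the total log-determinant
divergence, satisfies `X̄⁻¹ = (∑ᵢ Xᵢ⁻¹/√(1+‖Xᵢ⁻¹‖²)) / (∑ⱼ 1/√(1+‖Xⱼ⁻¹‖²))`; the
right-hand side is Hermitian positive-definite, so `X̄` equals its inverse and is
well defined and HPD. -/
theorem tld_mean_stationary {N m : ℕ} (hm : 0 < m)
    (Xs : Fin m → Matrix (Fin N) (Fin N) ℂ) (hXs : ∀ i, (Xs i).PosDef)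
    (Xbar : Matrix (Fin N) (Fin N) ℂ) (hXbar : Xbar.PosDef)
    (hstat : ∀ Y : Matrix (Fin N) (Fin N) ℂ, Y.IsHermitian →
      HasDerivAt
        (fun ε : ℝ => ∑ i,
          (Real.log ((Xs i * (Xbar + ε • Y)⁻¹).det.re) +
              (Matrix.trace ((Xs i)⁻¹ * (Xbar + ε • Y))).re - N) /
            Real.sqrt (1 + ‖(Xs i)⁻¹‖ ^ 2))
        0 0) :
    Xbar⁻¹ = (∑ j, (Real.sqrt (1 + ‖(Xs j)⁻¹‖ ^ 2))⁻¹)⁻¹ •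
        ∑ i, (Real.sqrt (1 + ‖(Xs i)⁻¹‖ ^ 2))⁻¹ • (Xs i)⁻¹ ∧
    ((∑ j, (Real.sqrt (1 + ‖(Xs j)⁻¹‖ ^ 2))⁻¹)⁻¹ •
        ∑ i, (Real.sqrt (1 + ‖(Xs i)⁻¹‖ ^ 2))⁻¹ • (Xs i)⁻¹).PosDef ∧
    Xbar = ((∑ j, (Real.sqrt (1 + ‖(Xs j)⁻¹‖ ^ 2))⁻¹)⁻¹ •
        ∑ i, (Real.sqrt (1 + ‖(Xs i)⁻¹‖ ^ 2))⁻¹ • (Xs i)⁻¹)⁻¹ := by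
  have hspos : ∀ i, 0 < Real.sqrt (1 + ‖(Xs i)⁻¹‖ ^ 2) := fun i =>
    Real.sqrt_pos.mpr (by positivity)
  set w : Fin m → ℝ := fun i => (Real.sqrt (1 + ‖(Xs i)⁻¹‖ ^ 2))⁻¹ with hw
  have hwpos : ∀ i, 0 < w i := fun i => inv_pos.mpr (hspos i)
  -- the derivative of the objective in direction Y equals re of trace (A * Y)
  set A : Matrix (Fin N) (Fin N) ℂ := ∑ i, w i • ((Xs i)⁻¹ - Xbar⁻¹) with hA
  have hkey : ∀ Y : Matrix (Fin N) (Fin N) ℂ, Y.IsHermitian →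
      (Matrix.trace (A * Y)).re = 0 := by
    intro Y hY
    have hder : HasDerivAt
        (fun ε : ℝ => ∑ i,
          (Real.log ((Xs i * (Xbar + ε • Y)⁻¹).det.re) +
              (Matrix.trace ((Xs i)⁻¹ * (Xbar + ε • Y))).re - N) /
            Real.sqrt (1 + ‖(Xs i)⁻¹‖ ^ 2))
        (∑ i, ((-(Matrix.trace (Xbar⁻¹ * Y)).re + (Matrix.trace ((Xs i)⁻¹ * Y)).re) /
            Real.sqrt (1 + ‖(Xs i)⁻¹‖ ^ 2))) 0 := by
      apply HasDerivAt.fun_sum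
      intro i _
      exact (((logdet_hasDerivAt Xbar Y (Xs i) hXbar (hXs i)).add
        (trace_hasDerivAt Xbar Y (Xs i)⁻¹)).sub_const (N : ℝ)).div_const _
    have hzero := (hder.unique (hstat Y hY))
    have hAtr : (Matrix.trace (A * Y)).re
        = ∑ i, ((-(Matrix.trace (Xbar⁻¹ * Y)).re + (Matrix.trace ((Xs i)⁻¹ * Y)).re) /
            Real.sqrt (1 + ‖(Xs i)⁻¹‖ ^ 2)) := by
      rw [hA, Matrix.sum_mul]
      simp only [Matrix.smul_mul, Matrix.trace_sum, Matrix.trace_smul, Matrix.sub_mul,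
        Matrix.trace_sub, Complex.re_sum, Complex.smul_re]
      refine Finset.sum_congr rfl fun i _ => ?_
      rw [div_eq_inv_mul, Complex.sub_re, smul_eq_mul]
      ring
    rw [hAtr, hzero]
  -- A is Hermitian
  have hAH : A.IsHermitian := by
    rw [Matrix.IsHermitian, hA, Matrix.conjTranspose_sum]
    refine Finset.sum_congr rfl fun i _ => ?_
    rw [Matrix.conjTranspose_smul, star_trivial,
      ((hXs i).1.inv.sub hXbar.1.inv).eq]
  have hA0 : A = 0 := herm_trace_sq_zero A hAH (hkey A hAH)
  -- rearrange
  have hsum : ∑ i, w i • (Xs i)⁻¹ = (∑ i, w i) • Xbar⁻¹ := by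
    have : ∑ i, (w i • (Xs i)⁻¹ - w i • Xbar⁻¹) = 0 := by
      rw [← hA0, hA]
      exact Finset.sum_congr rfl fun i _ => (smul_sub _ _ _).symm
    rw [Finset.sum_sub_distrib] at this
    rw [sub_eq_zero] at this
    rw [this, Finset.sum_smul]
  have hS : 0 < ∑ i, w i :=
    Finset.sum_pos (fun i _ => hwpos i) (Finset.univ_nonempty_iff.mpr ⟨⟨0, hm⟩⟩)
  have h1 : Xbar⁻¹ = (∑ j, w j)⁻¹ • ∑ i, w i • (Xs i)⁻¹ := by
    rw [hsum, smul_smul, inv_mul_cancel₀ hS.ne', one_smul]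
  refine ⟨h1, ?_, ?_⟩
  · rw [← h1]; exact hXbar.inv
  · rw [← h1]
    exact (Matrix.nonsing_inv_nonsing_inv Xbar hXbar.det_pos.ne'.isUnit).symm
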